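/- Let n be a natural number and 1 ≤ k < n. Regard S_{k+1} as the subgroup {w ∈ S_n : w(x) = x for all x > k+1} of S_n. Then for every pair of permutations g, h ∈ S_n, the polynomial ∑_{w ∈ S_{k+1}} α^{n−ν(h · g w g^{−1})} ∈ ℤ[α] is divisible by the product (1+α)(1+2α)⋯(1+kα); equivalently, for any subgroup H of S_n conjugate to S_{k+1} and any h ∈ S_n, the polynomial ∑_{w ∈ H} α^{n−ν(hw)} is divisible by ∏_{j=1}^{k}(1+jα). -/

import Mathlib

/-- The number of cycles `ν(w)` of a permutation `w` of `{1,…,n}`: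
the number of orbits of `w` acting on `Fin n` (fixed points count as cycles of length 1). -/
noncomputable def permCycles {n : ℕ} (w : Equiv.Perm (Fin n)) : ℕ :=
  Nat.card (MulAction.orbitRel.Quotient (Subgroup.zpowers w) (Fin n))

/-- Membership in the subgroup `S_{k+1} = {w ∈ S_n : w(x) = x for all x > k+1}` of `S_n`
(with `Fin n` indexed from `0`, i.e. `w x = x` whenever `k+1 ≤ x`). -/
def inSymSub (n k : ℕ) (w : Equiv.Perm (Fin n)) : Prop :=
  ∀ x : Fin n, k + 1 ≤ (x : ℕ) → w x = x

instance (n k : ℕ) : DecidablePred (inSymSub n k) := by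
  unfold inSymSub; infer_instance

open Equiv Equiv.Perm Finset Polynomial

variable {n : ℕ}

lemma orbitRel_iff_sameCycle (σ : Perm (Fin n)) (x y : Fin n) :
    (MulAction.orbitRel (Subgroup.zpowers σ) (Fin n)) x y ↔ σ.SameCycle y x := by
  constructor
  · rintro ⟨⟨u, hu⟩, h⟩
    obtain ⟨z, rfl⟩ := Subgroup.mem_zpowers_iff.mp hu
    exact ⟨z, h⟩
  · rintro ⟨z, hz⟩
    exact ⟨⟨σ ^ z, Subgroup.zpow_mem _ (Subgroup.mem_zpowers σ) z⟩, hz⟩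

lemma permCycles_eq (σ : Perm (Fin n)) :
    permCycles σ = (Finset.univ.filter fun x => σ x = x).card + σ.cycleFactorsFinset.card := by
  classical
  have key : Nat.card (Quotient (MulAction.orbitRel (Subgroup.zpowers σ) (Fin n)))
      = (Finset.univ.filter fun x => σ x = x).card + σ.cycleFactorsFinset.card := by
    set s := MulAction.orbitRel (Subgroup.zpowers σ) (Fin n) with hs
    let φ : Fin n → ({x : Fin n // σ x = x} ⊕ {c : Perm (Fin n) // c ∈ σ.cycleFactorsFinset}) :=
      fun x =>
        if h : σ x = x then Sum.inl ⟨x, h⟩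
        else Sum.inr ⟨σ.cycleOf x, (σ.cycleOf_mem_cycleFactorsFinset_iff).mpr (mem_support.mpr h)⟩
    have hsound : ∀ a b : Fin n, s a b → φ a = φ b := by
      intro a b hab
      obtain ⟨z, hz⟩ : σ.SameCycle b a := (orbitRel_iff_sameCycle σ a b).mp hab
      by_cases hb : σ b = b
      · have : a = b := by rw [← hz, zpow_apply_eq_self_of_apply_eq_self hb]
        rw [this]
      · have ha : σ a ≠ a := by
          intro ha
          apply hb
          have h1 : b = ((σ ^ z)⁻¹ : Perm (Fin n)) a := by rw [← hz]; simp
          rw [h1, ← zpow_neg, zpow_apply_eq_self_of_apply_eq_self ha, ha]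
        have hcyc : σ.cycleOf a = σ.cycleOf b := (Equiv.Perm.SameCycle.cycleOf_eq ⟨z, hz⟩).symm
        simp only [φ, dif_neg hb, dif_neg ha, hcyc]
    let F : Quotient s → _ := Quotient.lift φ hsound
    have hbij : Function.Bijective F := by
      constructor
      · intro q₁ q₂
        induction q₁ using Quotient.ind
        induction q₂ using Quotient.ind
        rename_i x y
        intro hxy
        change φ x = φ y at hxy
        apply Quotient.sound
        by_cases hx : σ x = x <;> by_cases hy : σ y = y <;>
          simp only [φ, dif_pos, dif_neg, hx, hy] at hxy
        · cases hxy; exact Setoid.refl _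
        · exact absurd hxy (by simp)
        · exact absurd hxy (by simp)
        · have hco : σ.cycleOf x = σ.cycleOf y := by
            simpa using hxy
          have hysup : y ∈ (σ.cycleOf x).support := by
            rw [hco]
            exact mem_support_cycleOf_iff.mpr ⟨Equiv.Perm.SameCycle.refl _ _, mem_support.mpr hy⟩
          have hsc : σ.SameCycle x y := (mem_support_cycleOf_iff.mp hysup).1
          exact (orbitRel_iff_sameCycle σ x y).mpr hsc.symm
      · rintro (⟨x, hx⟩ | ⟨c, hc⟩)
        · exact ⟨Quotient.mk s x, by simp only [F, Quotient.lift_mk, φ, dif_pos hx]⟩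
        · obtain ⟨x, hxc⟩ := ((mem_cycleFactorsFinset_iff.mp hc).1).nonempty_support
          have hxs : σ x ≠ x := by
            have := (mem_cycleFactorsFinset_iff.mp hc).2 x hxc
            rw [← this]
            exact mem_support.mp hxc
          have hcx : c = σ.cycleOf x := cycle_is_cycleOf hxc hc
          refine ⟨Quotient.mk s x, ?_⟩
          simp only [F, Quotient.lift_mk, φ, dif_neg hxs]
          congr 1
          exact Subtype.ext hcx.symm
    rw [Nat.card_congr (Equiv.ofBijective F hbij), Nat.card_sum,
      Nat.card_eq_fintype_card, Nat.card_eq_fintype_card, Fintype.card_subtype,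
      Fintype.card_coe]
  exact key

lemma fixed_card (σ : Perm (Fin n)) :
    (Finset.univ.filter fun x => σ x = x).card = n - σ.support.card := by
  classical
  have h := Finset.card_filter_add_card_filter_not
    (s := (Finset.univ : Finset (Fin n))) (p := fun x => σ x = x)
  have hsupp : Finset.univ.filter (fun x => ¬ σ x = x) = σ.support := rfl
  rw [hsupp] at h
  simp only [Finset.card_univ, Fintype.card_fin] at h
  omega

lemma cycleFactors_card_le (σ : Perm (Fin n)) :
    σ.cycleFactorsFinset.card ≤ σ.support.card := by
  classical
  have h1 : σ.cycleType.card = σ.cycleFactorsFinset.card := by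
    rw [cycleType_def, Multiset.card_map]; rfl
  have h2 : σ.cycleType.sum = σ.support.card := sum_cycleType σ
  have h3 : ∀ (m : Multiset ℕ), (∀ x ∈ m, 1 ≤ x) → Multiset.card m ≤ m.sum := by
    intro m
    induction m using Multiset.induction_on with
    | empty => simp
    | cons a s ih =>
      intro h
      simp only [Multiset.card_cons, Multiset.sum_cons]
      have h4 := h a (by simp)
      have h5 := ih fun x hx => h x (by simp [hx])
      omega
  have h6 := h3 σ.cycleType fun x hx => le_trans (by norm_num) (two_le_of_mem_cycleType hx)
  omega

lemma permCycles_le (σ : Perm (Fin n)) : permCycles σ ≤ n := by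
  have := fixed_card σ
  have := cycleFactors_card_le σ
  have hsc : σ.support.card ≤ n := le_trans (Finset.card_le_univ _) (by simp)
  rw [permCycles_eq]
  omega

lemma neg_one_pow_permCycles (σ : Perm (Fin n)) :
    (-1 : ℤ) ^ permCycles σ = (-1 : ℤ) ^ n * (Equiv.Perm.sign σ : ℤ) := by
  classical
  have h1 : σ.cycleType.card = σ.cycleFactorsFinset.card := by
    rw [cycleType_def, Multiset.card_map]; rfl
  have hsgn : (Equiv.Perm.sign σ : ℤ) = (-1 : ℤ) ^ (σ.cycleType.sum + σ.cycleType.card) := by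
    rw [sign_of_cycleType]; push_cast; ring
  have h2 : σ.cycleType.sum = σ.support.card := sum_cycleType σ
  have hsc : σ.support.card ≤ n := le_trans (Finset.card_le_univ _) (by simp)
  have key : ∀ a b : ℕ, a % 2 = b % 2 → ((-1 : ℤ)) ^ a = (-1) ^ b := by
    intro a b hab
    conv_lhs => rw [← Nat.div_add_mod a 2]
    conv_rhs => rw [← Nat.div_add_mod b 2]
    rw [hab, pow_add, pow_add, pow_mul, pow_mul]
    simp
  have h2' : σ.cycleType.sum ≤ n := by omega
  rw [permCycles_eq, fixed_card, hsgn, ← pow_add, ← h1, ← h2]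
  apply key
  omega

lemma inv_zpow_apply {j : ℕ} (σ : Perm (Fin n)) (f : Fin n → Fin j)
    (hf : ∀ x, f (σ x) = f x) : ∀ (z : ℤ) (x : Fin n), f ((σ ^ z) x) = f x := by
  have hnat : ∀ (m : ℕ) (x : Fin n), f ((σ ^ m) x) = f x := by
    intro m
    induction m with
    | zero => simp
    | succ m ih => intro x; rw [pow_succ, Equiv.Perm.mul_apply, ih, hf]
  intro z x
  rcases Int.eq_nat_or_neg z with ⟨m, rfl | rfl⟩
  · rw [zpow_natCast]; exact hnat m x
  · rw [zpow_neg, zpow_natCast]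
    have := hnat m (((σ ^ m)⁻¹ : Perm (Fin n)) x)
    simpa using this.symm

lemma card_colorings (σ : Perm (Fin n)) (j : ℕ) :
    (Finset.univ.filter fun f : Fin n → Fin j => ∀ x, f (σ x) = f x).card
      = j ^ permCycles σ := by
  classical
  set s := MulAction.orbitRel (Subgroup.zpowers σ) (Fin n) with hs
  have hcardQ : permCycles σ = Nat.card (Quotient s) := rfl
  let E : {f : Fin n → Fin j // ∀ x, f (σ x) = f x} ≃ (Quotient s → Fin j) :=
    { toFun := fun F => Quotient.lift F.1 (by
        rintro a b ⟨⟨u, hu⟩, hab⟩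
        obtain ⟨z, rfl⟩ := Subgroup.mem_zpowers_iff.mp hu
        have : (σ ^ z) b = a := hab
        rw [← this, inv_zpow_apply σ F.1 F.2])
      invFun := fun G => ⟨fun x => G (Quotient.mk s x), by
        intro x
        apply congrArg
        apply Quotient.sound
        exact ⟨⟨σ, Subgroup.mem_zpowers σ⟩, rfl⟩⟩
      left_inv := fun F => Subtype.ext (funext fun x => rfl)
      right_inv := fun G => funext fun q => by
        induction q using Quotient.ind
        rfl }
  have h1 : (Finset.univ.filter fun f : Fin n → Fin j => ∀ x, f (σ x) = f x).card
      = Nat.card {f : Fin n → Fin j // ∀ x, f (σ x) = f x} := by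
    rw [Nat.card_eq_fintype_card, Fintype.card_subtype]
  rw [h1, Nat.card_congr E, Nat.card_fun, Nat.card_eq_fintype_card, Fintype.card_fin, hcardQ]

lemma key_sum_zero (n k j : ℕ) (hjk : j ≤ k) (hkn : k < n) (g h : Perm (Fin n)) :
    ∑ w ∈ Finset.univ.filter (inSymSub n k),
      (-(j : ℤ)) ^ permCycles (h * (g * w * g⁻¹)) = 0 := by
  classical
  set H := Finset.univ.filter (inSymSub n k) with hH
  have hterm : ∀ w : Perm (Fin n),
      (-(j : ℤ)) ^ permCycles (h * (g * w * g⁻¹))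
        = ((-1 : ℤ) ^ n * (Equiv.Perm.sign h : ℤ))
          * ∑ f ∈ (Finset.univ : Finset (Fin n → Fin j)),
              (if (∀ x, f ((h * (g * w * g⁻¹)) x) = f x) then (Equiv.Perm.sign w : ℤ) else 0) := by
    intro w
    have hsgn : Equiv.Perm.sign (h * (g * w * g⁻¹)) = Equiv.Perm.sign h * Equiv.Perm.sign w := by
      rw [map_mul, map_mul, map_mul, map_inv, mul_comm (Equiv.Perm.sign g) (Equiv.Perm.sign w),
        mul_assoc, mul_inv_cancel, mul_one]
    have hsum : ∑ f ∈ (Finset.univ : Finset (Fin n → Fin j)),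
        (if (∀ x, f ((h * (g * w * g⁻¹)) x) = f x) then (Equiv.Perm.sign w : ℤ) else 0)
        = ((j : ℤ) ^ permCycles (h * (g * w * g⁻¹))) * (Equiv.Perm.sign w : ℤ) := by
      rw [← Finset.sum_filter, Finset.sum_const, nsmul_eq_mul, card_colorings]
      push_cast
      ring
    rw [hsum, neg_pow, neg_one_pow_permCycles, hsgn]
    push_cast
    ring
  rw [Finset.sum_congr rfl fun w _ => hterm w, ← Finset.mul_sum]
  rw [Finset.sum_comm]
  rw [Finset.sum_eq_zero, mul_zero]
  intro f _
  -- pigeonhole: find a ≠ b with small indices and f (g a) = f (g b)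
  have hk1n : k + 1 ≤ n := hkn
  have hcard : Fintype.card (Fin j) < Fintype.card (Fin (k + 1)) := by
    simpa using Nat.lt_of_le_of_lt hjk (Nat.lt_succ_self k)
  obtain ⟨i₁, i₂, hne, heq⟩ := Fintype.exists_ne_map_eq_of_card_lt
    (fun i : Fin (k + 1) => f (g (Fin.castLE hk1n i))) hcard
  set a := Fin.castLE hk1n i₁ with ha
  set b := Fin.castLE hk1n i₂ with hb
  have hab : a ≠ b := fun hc => hne (Fin.castLE_injective hk1n hc)
  have hak : (a : ℕ) ≤ k := Nat.lt_succ_iff.mp i₁.isLt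
  have hbk : (b : ℕ) ≤ k := Nat.lt_succ_iff.mp i₂.isLt
  set τ := Equiv.swap a b with hτ
  have hτfix : ∀ x : Fin n, k + 1 ≤ (x : ℕ) → τ x = x := by
    intro x hx
    apply Equiv.swap_apply_of_ne_of_ne
    · intro hc; rw [hc] at hx; omega
    · intro hc; rw [hc] at hx; omega
  have hfgτ : ∀ y : Fin n, f (g (τ y)) = f (g y) := by
    intro y
    rcases eq_or_ne y a with rfl | hya
    · rw [hτ, Equiv.swap_apply_left]; exact heq.symm
    rcases eq_or_ne y b with rfl | hyb
    · rw [hτ, Equiv.swap_apply_right]; exact heq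
    · rw [hτ, Equiv.swap_apply_of_ne_of_ne hya hyb]
  have hCtrans : ∀ w : Perm (Fin n), (∀ x, f ((h * (g * w * g⁻¹)) x) = f x)
      → (∀ x, f ((h * (g * (w * τ) * g⁻¹)) x) = f x) := by
    intro w hc x
    have h1 := hc (g (τ (g⁻¹ x)))
    simp only [Equiv.Perm.mul_apply, Equiv.Perm.inv_def, Equiv.symm_apply_apply] at h1 ⊢
    rw [h1, hfgτ, Equiv.apply_symm_apply]
  apply Finset.sum_involution (g := fun w _ => w * τ)
  · -- f a + f (g a) = 0
    intro w hw
    by_cases hC : (∀ x, f ((h * (g * w * g⁻¹)) x) = f x)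
    · rw [if_pos hC, if_pos (hCtrans w hC)]
      have : Equiv.Perm.sign (w * τ) = - Equiv.Perm.sign w := by
        rw [map_mul, hτ, Equiv.Perm.sign_swap hab, mul_neg, mul_one]
      rw [this]
      push_cast
      ring
    · have hC' : ¬ (∀ x, f ((h * (g * (w * τ)) * g⁻¹) x) = f x) := by
        intro hc
        apply hC
        have := hCtrans (w * τ) (by simpa [mul_assoc] using hc)
        simpa [mul_assoc, Equiv.swap_mul_self, hτ] using this
      rw [if_neg hC, if_neg (by simpa [mul_assoc] using hC')]
      ring
  · -- nonzero → moved
    intro w hw hne0 hcontr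
    have hτ1 : τ = 1 := by
      have h2 : w * τ = w * 1 := by rw [mul_one]; exact hcontr
      exact mul_left_cancel h2
    apply hab
    have h1 : τ a = b := by rw [hτ]; exact Equiv.swap_apply_left a b
    rw [hτ1] at h1
    simpa using h1
  · -- membership
    intro w hw
    simp only [hH, Finset.mem_filter, Finset.mem_univ, true_and] at hw ⊢
    intro x hx
    have : τ x = x := hτfix x hx
    rw [Equiv.Perm.mul_apply, this]
    exact hw x hx
  · -- involutive
    intro w hw
    rw [mul_assoc, hτ, Equiv.swap_mul_self, mul_one]

/-- For `1 ≤ k < n` and any `g, h ∈ S_n`, the polynomial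
`∑_{w ∈ S_{k+1}} α^{n−ν(h·gwg⁻¹)} ∈ ℤ[α]` is divisible by `(1+α)(1+2α)⋯(1+kα)`. -/
theorem stmt3 (n k : ℕ) (hk1 : 1 ≤ k) (hkn : k < n) (g h : Equiv.Perm (Fin n)) :
    (∏ j ∈ Finset.Icc 1 k, (1 + (j : Polynomial ℤ) * Polynomial.X)) ∣
    ∑ w ∈ Finset.univ.filter (inSymSub n k),
      (Polynomial.X : Polynomial ℤ) ^ (n - permCycles (h * (g * w * g⁻¹))) := by
  classical
  set H := Finset.univ.filter (inSymSub n k) with hH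
  set P : Polynomial ℤ :=
    ∑ w ∈ H, (Polynomial.X : Polynomial ℤ) ^ (n - permCycles (h * (g * w * g⁻¹))) with hP
  set D : Polynomial ℤ := ∏ j ∈ Finset.Icc 1 k, (1 + (j : Polynomial ℤ) * Polynomial.X) with hD
  show D ∣ P
  have hDprim : D.IsPrimitive := by
    rw [hD]
    apply Finset.prod_induction _ Polynomial.IsPrimitive
      (fun p q hp hq => hp.mul hq) Polynomial.isPrimitive_one
    intro j _
    intro r hr
    have h0 := (Polynomial.C_dvd_iff_dvd_coeff r _).mp hr 0
    have hc0 : (1 + (j : Polynomial ℤ) * Polynomial.X).coeff 0 = 1 := by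
      simp
    rw [hc0] at h0
    exact isUnit_of_dvd_one h0
  -- divisibility after mapping to ℚ
  have hmapdvd : D.map (algebraMap ℤ ℚ) ∣ P.map (algebraMap ℤ ℚ) := by
    have hDmap : D.map (algebraMap ℤ ℚ)
        = ∏ j ∈ Finset.Icc 1 k, (Polynomial.C (j : ℚ) *
            (Polynomial.X - Polynomial.C (-(j : ℚ)⁻¹))) := by
      rw [hD, Polynomial.map_prod]
      apply Finset.prod_congr rfl
      intro j hj
      have hj0 : (j : ℚ) ≠ 0 := by
        have := (Finset.mem_Icc.mp hj).1
        positivity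
      rw [Polynomial.map_add, Polynomial.map_one, Polynomial.map_mul, Polynomial.map_natCast,
        Polynomial.map_X]
      rw [mul_sub, ← Polynomial.C_mul]
      rw [mul_neg, mul_inv_cancel₀ hj0]
      simp only [map_neg, map_one, Polynomial.C_eq_natCast]
      ring
    rw [hDmap, Finset.prod_mul_distrib]
    have hu : IsUnit (∏ x ∈ Finset.Icc 1 k, (Polynomial.C (x : ℚ))) := by
      rw [← map_prod (Polynomial.C : ℚ →+* Polynomial ℚ)]
      apply Polynomial.isUnit_C.mpr
      apply isUnit_iff_ne_zero.mpr
      apply Finset.prod_ne_zero_iff.mpr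
      intro x hx
      have hx1 : 1 ≤ x := (Finset.mem_Icc.mp hx).1
      positivity
    apply (hu.mul_left_dvd).mpr
    · -- ∏ (X - C (-(j)⁻¹)) ∣ P.map
      apply Finset.prod_dvd_of_coprime
      · -- pairwise coprime
        have hinj : Function.Injective (fun j : ℕ => -((j : ℚ)⁻¹)) := by
          intro a b hab
          simp only at hab
          have : ((a : ℚ))⁻¹ = ((b : ℚ))⁻¹ := by linarith [hab]
          exact Nat.cast_injective (inv_injective this)
        exact (Polynomial.pairwise_coprime_X_sub_C hinj).set_pairwise _
      · intro j hj
        rw [Polynomial.dvd_iff_isRoot]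
        have hj1 : 1 ≤ j := (Finset.mem_Icc.mp hj).1
        have hjk : j ≤ k := (Finset.mem_Icc.mp hj).2
        have hj0 : (j : ℚ) ≠ 0 := by positivity
        have hq0 : (-(j : ℚ)) ≠ 0 := by simpa using hj0
        unfold Polynomial.IsRoot
        have heval : Polynomial.eval (-(j : ℚ)⁻¹) (P.map (algebraMap ℤ ℚ))
            = ∑ w ∈ H, (-(j : ℚ)⁻¹) ^ (n - permCycles (h * (g * w * g⁻¹))) := by
          rw [hP, Polynomial.map_sum, Polynomial.eval_finset_sum]
          apply Finset.sum_congr rfl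
          intro w _
          rw [Polynomial.map_pow, Polynomial.map_X, Polynomial.eval_pow, Polynomial.eval_X]
        rw [heval]
        have hmul : (-(j : ℚ)) ^ n * ∑ w ∈ H, (-(j : ℚ)⁻¹) ^ (n - permCycles (h * (g * w * g⁻¹)))
            = ∑ w ∈ H, (-(j : ℚ)) ^ (permCycles (h * (g * w * g⁻¹))) := by
          rw [Finset.mul_sum]
          apply Finset.sum_congr rfl
          intro w _
          set m := permCycles (h * (g * w * g⁻¹)) with hm
          have hmn : m ≤ n := permCycles_le _
          have hsplit : (-(j : ℚ)) ^ n = (-(j : ℚ)) ^ (n - m) * (-(j : ℚ)) ^ m := by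
            rw [← pow_add]
            congr 1
            omega
          rw [hsplit]
          have hinv : (-(j : ℚ)⁻¹) = (-(j : ℚ))⁻¹ := by
            rw [neg_inv]
          rw [hinv, mul_assoc, mul_comm ((-(j:ℚ))^m), ← mul_assoc, ← mul_pow,
            mul_inv_cancel₀ hq0, one_pow, one_mul]
        have hzero : ∑ w ∈ H, (-(j : ℚ)) ^ (permCycles (h * (g * w * g⁻¹))) = 0 := by
          have := key_sum_zero n k j hjk hkn g h
          have hcast := congrArg (fun z : ℤ => (z : ℚ)) this
          push_cast at hcast
          convert hcast using 2
        rw [hzero] at hmul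
        have := mul_eq_zero.mp hmul
        rcases this with h1 | h1
        · exact absurd h1 (pow_ne_zero n hq0)
        · exact h1
  -- Gauss descent
  by_cases hP0 : P = 0
  · rw [hP0]; exact dvd_zero D
  have hqprim := P.isPrimitive_primPart
  have h1 : D ∣ P.primPart := by
    rw [hDprim.dvd_iff_fraction_map_dvd_fraction_map ℚ]
    have h2 : P.map (algebraMap ℤ ℚ)
        = Polynomial.C ((P.content : ℚ)) * P.primPart.map (algebraMap ℤ ℚ) := by
      conv_lhs => rw [P.eq_C_content_mul_primPart]
      rw [Polynomial.map_mul, Polynomial.map_C]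
      norm_cast
    have hcne : ((P.content : ℚ)) ≠ 0 := by
      exact_mod_cast fun hc => hP0 (Polynomial.content_eq_zero_iff.mp (by exact_mod_cast hc))
    have hu : IsUnit (Polynomial.C ((P.content : ℚ))) :=
      Polynomial.isUnit_C.mpr (isUnit_iff_ne_zero.mpr hcne)
    rw [h2] at hmapdvd
    exact (hu.dvd_mul_left).mp hmapdvd
  exact h1.trans P.primPart_dvd
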